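/- Fix ℓ > 0. The map Φ_ℓ(t,v,s) = (v, exp(π(−e^{2t} − |v|² + 2is)/ℓ)) satisfies: (i) its image is exactly the open set O_ℓ = {(v,w) ∈ ℂ² : 0 < |w| < exp(−π|v|²/ℓ)}; (ii) Φ_ℓ(t,v,s) = Φ_ℓ(t',v',s') if and only if t = t', v = v', and s − s' ∈ ℓ·ℤ. Consequently Φ_ℓ descends to a homeomorphism from ℝ × ℂ × (ℝ/ℓℤ) (with the quotient topology) onto the open subset O_ℓ of ℂ². -/

import Mathlib

/-- The cusp coordinate map `Φ_ℓ(t,v,s) = (v, exp(π(-e^{2t} - |v|² + 2is)/ℓ))`. -/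
noncomputable def cuspΦ (ℓ t : ℝ) (v : ℂ) (s : ℝ) : ℂ × ℂ :=
  (v, Complex.exp ((Real.pi : ℂ) *
        (-(Real.exp (2 * t) : ℂ) - (((‖v‖ : ℝ) : ℂ))^2 + 2 * Complex.I * (s : ℂ))
      / (ℓ : ℂ)))

/-- The open set `O_ℓ = {(v,w) : 0 < |w| < exp(-π|v|²/ℓ)} ⊂ ℂ²`. -/
def cuspO (ℓ : ℝ) : Set (ℂ × ℂ) :=
  {p : ℂ × ℂ | 0 < ‖p.2‖ ∧
      ‖p.2‖ < Real.exp (-Real.pi * (‖p.1‖)^2 / ℓ)}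

namespace CuspAux

open Complex

/-- The "radius" function. -/
noncomputable def R (ℓ t : ℝ) (v : ℂ) : ℝ :=
  Real.pi * (-(Real.exp (2 * t)) - (‖v‖)^2) / ℓ

/-- The descended map. -/
noncomputable def F (ℓ : ℝ) (p : ℝ × ℂ × AddCircle ℓ) : ℂ × ℂ :=
  (p.2.1, (Real.exp (R ℓ p.1 p.2.1) : ℂ) * (AddCircle.toCircle p.2.2 : ℂ))

lemma exponent_decomp (ℓ : ℝ) (hℓ : ℓ ≠ 0) (t : ℝ) (v : ℂ) (s : ℝ) :
    (Real.pi : ℂ) *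
        (-(Real.exp (2 * t) : ℂ) - (((‖v‖ : ℝ) : ℂ))^2 + 2 * Complex.I * (s : ℂ))
      / (ℓ : ℂ)
    = ((R ℓ t v : ℝ) : ℂ) + ((2 * Real.pi * s / ℓ : ℝ) : ℂ) * Complex.I := by
  have hℓ' : (ℓ : ℂ) ≠ 0 := Complex.ofReal_ne_zero.mpr hℓ
  rw [R]
  push_cast
  field_simp

lemma F_mk (ℓ : ℝ) (hℓ : ℓ ≠ 0) (t : ℝ) (v : ℂ) (s : ℝ) :
    F ℓ (t, v, (s : AddCircle ℓ)) = cuspΦ ℓ t v s := by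
  unfold F cuspΦ
  refine Prod.ext rfl ?_
  simp only [AddCircle.toCircle_apply_mk, Circle.coe_exp]
  rw [exponent_decomp ℓ hℓ, Complex.exp_add, Complex.ofReal_exp]
  congr 2
  push_cast
  ring

lemma abs_F_snd (ℓ : ℝ) (p : ℝ × ℂ × AddCircle ℓ) :
    ‖(F ℓ p).2‖ = Real.exp (R ℓ p.1 p.2.1) := by
  unfold F
  rw [norm_mul, Complex.norm_real, Circle.norm_coe, mul_one,
    Real.norm_eq_abs, abs_of_pos (Real.exp_pos _)]

lemma R_lt (ℓ : ℝ) (hℓ : 0 < ℓ) (t : ℝ) (v : ℂ) :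
    R ℓ t v < -Real.pi * (‖v‖)^2 / ℓ := by
  rw [R, div_lt_div_iff_of_pos_right hℓ]
  nlinarith [Real.exp_pos (2 * t), Real.pi_pos]

lemma F_mem (ℓ : ℝ) (hℓ : 0 < ℓ) (p : ℝ × ℂ × AddCircle ℓ) :
    F ℓ p ∈ cuspO ℓ := by
  refine ⟨?_, ?_⟩
  · rw [abs_F_snd]; exact Real.exp_pos _
  · rw [abs_F_snd]
    have : (F ℓ p).1 = p.2.1 := rfl
    rw [this]
    exact Real.exp_lt_exp.mpr (R_lt ℓ hℓ _ _)

lemma continuous_F (ℓ : ℝ) : Continuous (F ℓ) := by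
  unfold F R
  refine Continuous.prodMk (continuous_fst.comp continuous_snd) (Continuous.mul ?_ ?_)
  · refine Complex.continuous_ofReal.comp (Real.continuous_exp.comp ?_)
    refine Continuous.div_const (Continuous.mul continuous_const ?_) ℓ
    exact Continuous.sub (Continuous.neg (Real.continuous_exp.comp
      (continuous_const.mul continuous_fst)))
      ((continuous_norm.comp (continuous_fst.comp continuous_snd)).pow 2)
  · exact continuous_subtype_val.comp
      (AddCircle.continuous_toCircle.comp (continuous_snd.comp continuous_snd))

/-- The inverse map on `cuspO ℓ`. -/
noncomputable def G (ℓ : ℝ) (hℓ : 0 < ℓ) (q : cuspO ℓ) : ℝ × ℂ × AddCircle ℓ :=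
  (Real.log (-ℓ / Real.pi * Real.log (‖(q : ℂ × ℂ).2‖)
      - (‖(q : ℂ × ℂ).1‖)^2) / 2,
   (q : ℂ × ℂ).1,
   (AddCircle.homeomorphCircle hℓ.ne').symm
     ⟨(q : ℂ × ℂ).2 / ((‖(q : ℂ × ℂ).2‖ : ℝ) : ℂ), by
       have h0 : (q : ℂ × ℂ).2 ≠ 0 := by
         have := q.2.1
         intro h; rw [h] at this; simp at this
       refine mem_sphere_zero_iff_norm.mpr ?_
       rw [norm_div, Complex.norm_real, norm_norm, div_self (ne_of_gt q.2.1)]⟩)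

lemma G_pos (ℓ : ℝ) (hℓ : 0 < ℓ) (q : cuspO ℓ) :
    0 < -ℓ / Real.pi * Real.log (‖(q : ℂ × ℂ).2‖)
      - (‖(q : ℂ × ℂ).1‖)^2 := by
  obtain ⟨h1, h2⟩ := q.2
  have hlog : Real.log (‖(q : ℂ × ℂ).2‖)
      < -Real.pi * (‖(q : ℂ × ℂ).1‖)^2 / ℓ := by
    have := Real.log_lt_log h1 h2
    rwa [Real.log_exp] at this
  have hπ : 0 < Real.pi := Real.pi_pos
  have : -ℓ / Real.pi * Real.log (‖(q : ℂ × ℂ).2‖)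
      > -ℓ / Real.pi * (-Real.pi * (‖(q : ℂ × ℂ).1‖)^2 / ℓ) := by
    apply mul_lt_mul_of_neg_left hlog
    exact div_neg_of_neg_of_pos (neg_neg_iff_pos.mpr hℓ) hπ
  have heq : -ℓ / Real.pi * (-Real.pi * (‖(q : ℂ × ℂ).1‖)^2 / ℓ)
      = (‖(q : ℂ × ℂ).1‖)^2 := by
    field_simp
  linarith [heq ▸ this]

lemma continuous_G (ℓ : ℝ) (hℓ : 0 < ℓ) : Continuous (G ℓ hℓ) := by
  have habs : Continuous fun q : cuspO ℓ => ‖(q : ℂ × ℂ).2‖ :=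
    continuous_norm.comp (continuous_snd.comp continuous_subtype_val)
  have hne : ∀ q : cuspO ℓ, ‖(q : ℂ × ℂ).2‖ ≠ 0 := fun q => ne_of_gt q.2.1
  refine Continuous.prodMk ?_ (Continuous.prodMk ?_ ?_)
  · refine Continuous.div_const ?_ 2
    refine Continuous.log ?_ ?_
    · exact Continuous.sub (continuous_const.mul (Continuous.log habs hne))
        ((continuous_norm.comp (continuous_fst.comp continuous_subtype_val)).pow 2)
    · intro q; exact ne_of_gt (G_pos ℓ hℓ q)
  · exact continuous_fst.comp continuous_subtype_val
  · refine (AddCircle.homeomorphCircle hℓ.ne').symm.continuous.comp ?_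
    refine Continuous.subtype_mk ?_ _
    exact Continuous.div (continuous_snd.comp continuous_subtype_val)
      (Complex.continuous_ofReal.comp habs)
      (fun q => Complex.ofReal_ne_zero.mpr (hne q))

lemma right_inv (ℓ : ℝ) (hℓ : 0 < ℓ) (q : cuspO ℓ) : F ℓ (G ℓ hℓ q) = (q : ℂ × ℂ) := by
  obtain ⟨⟨v, w⟩, hq⟩ := q
  have h1 : (0:ℝ) < ‖w‖ := hq.1
  have hw : w ≠ 0 := by intro h; rw [h] at h1; simp at h1
  have hX := G_pos ℓ hℓ ⟨(v, w), hq⟩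
  simp only at hX
  unfold F G R
  simp only
  refine Prod.ext rfl ?_
  have he : Real.exp (2 * (Real.log (-ℓ / Real.pi * Real.log (‖w‖)
      - (‖v‖)^2) / 2)) = -ℓ / Real.pi * Real.log (‖w‖)
      - (‖v‖)^2 := by
    rw [mul_div_cancel₀ _ (two_ne_zero), Real.exp_log hX]
  rw [he]
  have hr : Real.pi * (-(-ℓ / Real.pi * Real.log (‖w‖) - (‖v‖)^2)
      - (‖v‖)^2) / ℓ = Real.log (‖w‖) := by
    field_simp
    ring
  rw [hr, Real.exp_log h1]
  show ((‖w‖ : ℝ) : ℂ) * _ = w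
  have hcirc : ∀ c : Circle, AddCircle.toCircle
      ((AddCircle.homeomorphCircle (T := ℓ) hℓ.ne').symm c) = c := by
    intro c
    rw [← AddCircle.homeomorphCircle_apply hℓ.ne', Homeomorph.apply_symm_apply]
  erw [hcirc]
  rw [mul_div_assoc']
  exact mul_div_cancel_left₀ w (Complex.ofReal_ne_zero.mpr (ne_of_gt h1))

lemma symm_eq (ℓ : ℝ) (hℓ : ℓ ≠ 0) (z : AddCircle ℓ) (c : Circle)
    (h : (c : ℂ) = (AddCircle.toCircle z : ℂ)) :
    (AddCircle.homeomorphCircle hℓ).symm c = z := by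
  have hc : c = AddCircle.toCircle z := Subtype.ext h
  rw [hc, ← AddCircle.homeomorphCircle_apply hℓ, Homeomorph.symm_apply_apply]

lemma left_inv (ℓ : ℝ) (hℓ : 0 < ℓ) (p : ℝ × ℂ × AddCircle ℓ) :
    G ℓ hℓ ⟨F ℓ p, F_mem ℓ hℓ p⟩ = p := by
  obtain ⟨t, v, z⟩ := p
  have habs : ‖(F ℓ (t, v, z)).2‖ = Real.exp (R ℓ t v) := abs_F_snd ℓ _
  refine Prod.ext ?_ (Prod.ext rfl ?_)
  · show Real.log (-ℓ / Real.pi * Real.log (‖(F ℓ (t, v, z)).2‖)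
        - (‖(F ℓ (t, v, z)).1‖)^2) / 2 = t
    have h1 : (F ℓ (t, v, z)).1 = v := rfl
    rw [habs, h1, Real.log_exp, R]
    have : -ℓ / Real.pi * (Real.pi * (-(Real.exp (2 * t)) - (‖v‖)^2) / ℓ)
        - (‖v‖)^2 = Real.exp (2 * t) := by
      field_simp
      ring
    rw [this, Real.log_exp]
    ring
  · show (AddCircle.homeomorphCircle hℓ.ne').symm
        ⟨(F ℓ (t, v, z)).2 / ((‖(F ℓ (t, v, z)).2‖ : ℝ) : ℂ), _⟩ = z
    have h2 : (F ℓ (t, v, z)).2 / ((‖(F ℓ (t, v, z)).2‖ : ℝ) : ℂ)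
        = (AddCircle.toCircle z : ℂ) := by
      rw [habs]
      unfold F
      simp only
      rw [mul_comm, mul_div_assoc, div_self (Complex.ofReal_ne_zero.mpr
        (ne_of_gt (Real.exp_pos _))), mul_one]
    exact symm_eq ℓ hℓ.ne' z _ h2

end CuspAux

theorem cusp_chart (ℓ : ℝ) (hℓ : 0 < ℓ) :
    -- (i) the image of `Φ_ℓ` is exactly `O_ℓ`
    Set.range (fun p : ℝ × ℂ × ℝ => cuspΦ ℓ p.1 p.2.1 p.2.2) = cuspO ℓ
    -- (ii) `Φ_ℓ(t,v,s) = Φ_ℓ(t',v',s')` iff `t = t'`, `v = v'` and `s - s' ∈ ℓℤ`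
    ∧ (∀ (t t' : ℝ) (v v' : ℂ) (s s' : ℝ),
        cuspΦ ℓ t v s = cuspΦ ℓ t' v' s' ↔
          t = t' ∧ v = v' ∧ ∃ k : ℤ, s - s' = ℓ * k)
    -- hence `Φ_ℓ` descends to a homeomorphism `ℝ × ℂ × (ℝ/ℓℤ) ≃ O_ℓ`
    ∧ ∃ h : (ℝ × ℂ × AddCircle ℓ) ≃ₜ cuspO ℓ,
        ∀ (t : ℝ) (v : ℂ) (s : ℝ),
          (h (t, v, (s : AddCircle ℓ)) : ℂ × ℂ) = cuspΦ ℓ t v s := by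
  have hℓ' : ℓ ≠ 0 := hℓ.ne'
  refine ⟨?_, ?_, ?_⟩
  · ext q
    constructor
    · rintro ⟨⟨t, v', s⟩, h⟩
      rw [← h]
      show cuspΦ ℓ t v' s ∈ cuspO ℓ
      rw [← CuspAux.F_mk ℓ hℓ']
      exact CuspAux.F_mem ℓ hℓ _
    · intro hq
      set p := CuspAux.G ℓ hℓ ⟨q, hq⟩ with hp
      obtain ⟨s, hs⟩ := Quotient.exists_rep p.2.2
      refine ⟨(p.1, p.2.1, s), ?_⟩
      show cuspΦ ℓ p.1 p.2.1 s = q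
      rw [← CuspAux.F_mk ℓ hℓ']
      have hscoe : (s : AddCircle ℓ) = p.2.2 := hs
      rw [hscoe]
      exact CuspAux.right_inv ℓ hℓ ⟨q, hq⟩
  · intro t t' v v' s s'
    constructor
    · intro h
      have hv : v = v' := congrArg Prod.fst h
      subst hv
      have h2 : Complex.exp ((Real.pi : ℂ) *
            (-(Real.exp (2 * t) : ℂ) - (((‖v‖ : ℝ) : ℂ))^2 + 2 * Complex.I * (s : ℂ))
          / (ℓ : ℂ)) = Complex.exp ((Real.pi : ℂ) *
            (-(Real.exp (2 * t') : ℂ) - (((‖v‖ : ℝ) : ℂ))^2 + 2 * Complex.I * (s' : ℂ))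
          / (ℓ : ℂ)) := congrArg Prod.snd h
      rw [Complex.exp_eq_exp_iff_exists_int] at h2
      obtain ⟨n, hn⟩ := h2
      rw [CuspAux.exponent_decomp ℓ hℓ' t v s, CuspAux.exponent_decomp ℓ hℓ' t' v s'] at hn
      have hcast : ((n : ℂ) * (2 * (Real.pi : ℂ) * Complex.I))
          = ((2 * Real.pi * n : ℝ) : ℂ) * Complex.I := by push_cast; ring
      rw [hcast] at hn
      have hre := congrArg Complex.re hn
      have him := congrArg Complex.im hn
      simp only [Complex.add_re, Complex.add_im, Complex.ofReal_re, Complex.ofReal_im,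
        Complex.mul_re, Complex.mul_im, Complex.I_re, Complex.I_im, mul_zero, mul_one,
        zero_mul, add_zero, zero_add, sub_zero, zero_sub, neg_zero] at hre him
      have ht : t = t' := by
        unfold CuspAux.R at hre
        field_simp at hre
        have h4 := Real.exp_injective (show Real.exp (2 * t) = Real.exp (2 * t') by linarith)
        linarith
      refine ⟨ht, rfl, n, ?_⟩
      have h2π : (2 * Real.pi) ≠ 0 := by positivity
      have key : 2 * Real.pi * (s - s') = 2 * Real.pi * (ℓ * n) := by
        field_simp at him
        nlinarith [Real.pi_pos]
      exact mul_left_cancel₀ h2π key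
    · rintro ⟨rfl, rfl, k, hk⟩
      refine Prod.ext rfl ?_
      show Complex.exp _ = Complex.exp _
      rw [Complex.exp_eq_exp_iff_exists_int]
      refine ⟨k, ?_⟩
      rw [CuspAux.exponent_decomp ℓ hℓ' t v s, CuspAux.exponent_decomp ℓ hℓ' t v s']
      have hθ : (2 * Real.pi * s / ℓ : ℝ) = 2 * Real.pi * s' / ℓ + 2 * Real.pi * k := by
        field_simp
        linear_combination hk
      rw [hθ]
      push_cast
      ring
  · refine ⟨{ toFun := fun p => ⟨CuspAux.F ℓ p, CuspAux.F_mem ℓ hℓ p⟩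
              invFun := CuspAux.G ℓ hℓ
              left_inv := CuspAux.left_inv ℓ hℓ
              right_inv := fun q => Subtype.ext (CuspAux.right_inv ℓ hℓ q)
              continuous_toFun := (CuspAux.continuous_F ℓ).subtype_mk _
              continuous_invFun := CuspAux.continuous_G ℓ hℓ }, ?_⟩
    intro t v s
    exact CuspAux.F_mk ℓ hℓ' t v s
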